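/- arXiv:2506.15513 — 5 statements merged into one kernel-verified Lean document; each statement's English description precedes it below -/
import Mathlib

section
/- Let α be a finite nonempty type and let p, q : α → ℝ be probability mass functions with p a > 0 for every a. Let η be a real number with 0 ≤ η ≤ 1/2, and set m = (1−η)·p + η·q (pointwise). If the chi-squared divergence satisfies χ²(q‖p) ≤ 1, then the Kullback–Leibler divergence of the mixture from the parametric distribution satisfies KL(m‖p) ≤ η² / (2·(1−η)). -/
open Finset Real

/-- Quadratic lower bound for the logarithm: `t - t²/2 ≤ log (1+t)` for `t ≥ 0`. -/
lemma aux_log_quad (t : ℝ) (ht : 0 ≤ t) : t - t ^ 2 / 2 ≤ Real.log (1 + t) := by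
  set f : ℝ → ℝ := fun u => Real.log (1 + u) - u + u ^ 2 / 2 with hf
  have hderiv : ∀ s : ℝ, 0 ≤ s → HasDerivAt f ((1 + s)⁻¹ - 1 + s) s := by
    intro s hs
    have h1 : HasDerivAt (fun u : ℝ => 1 + u) 1 s := by
      simpa using (hasDerivAt_id s).const_add 1
    have h2 : HasDerivAt (fun u : ℝ => Real.log (1 + u)) ((1 + s)⁻¹ * 1) s :=
      (Real.hasDerivAt_log (by positivity)).comp s h1
    have h3 : HasDerivAt (fun u : ℝ => u ^ 2 / 2) (2 * s ^ 1 / 2) s :=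
      (hasDerivAt_pow 2 s).div_const 2
    have := (h2.sub (hasDerivAt_id s)).add h3
    have h4 : HasDerivAt f ((1 + s)⁻¹ * 1 - 1 + 2 * s ^ 1 / 2) s := this
    convert h4 using 1; ring
  have hmono : MonotoneOn f (Set.Ici (0 : ℝ)) := by
    apply monotoneOn_of_deriv_nonneg (convex_Ici 0)
    · intro s hs
      exact ((hderiv s hs).continuousAt).continuousWithinAt
    · intro s hs
      rw [interior_Ici] at hs
      exact (hderiv s (le_of_lt hs)).differentiableAt.differentiableWithinAt
    · intro s hs
      rw [interior_Ici] at hs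
      rw [(hderiv s (le_of_lt hs)).deriv]
      have h1s : (0:ℝ) < 1 + s := by have := hs.out; linarith
      have heq : (1 + s)⁻¹ - 1 + s = s ^ 2 / (1 + s) := by field_simp; ring
      rw [heq]; positivity
  have h0 : f 0 ≤ f t := hmono (by simp) (by simpa using ht) ht
  simp only [hf] at h0
  simp only [add_zero, Real.log_one] at h0
  nlinarith [h0]

/-- Key pointwise inequality: for `0 < c ≤ 1` and `x ≥ c`,
`x log x ≤ (x - 1) + (x - 1)²/(2c)`. -/
lemma aux_key (c x : ℝ) (hc0 : 0 < c) (hc1 : c ≤ 1) (hx : c ≤ x) :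
    x * Real.log x ≤ (x - 1) + (x - 1) ^ 2 / (2 * c) := by
  have hx0 : 0 < x := lt_of_lt_of_le hc0 hx
  rcases le_or_gt 1 x with h1 | h1
  · -- case x ≥ 1 : use log x ≤ sinh (log x) = (x - x⁻¹)/2
    have hlog : (0:ℝ) ≤ Real.log x := Real.log_nonneg h1
    have hs : Real.log x ≤ Real.sinh (Real.log x) := Real.self_le_sinh_iff.2 hlog
    rw [Real.sinh_eq, Real.exp_log hx0, Real.exp_neg, Real.exp_log hx0] at hs
    have h2 : x * Real.log x ≤ x * ((x - x⁻¹) / 2) :=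
      mul_le_mul_of_nonneg_left hs (le_of_lt hx0)
    have h3 : x * ((x - x⁻¹) / 2) = (x - 1) + (x - 1) ^ 2 / 2 := by
      field_simp; ring
    have h4 : (x - 1) ^ 2 / 2 ≤ (x - 1) ^ 2 / (2 * c) := by
      apply div_le_div_of_nonneg_left (by positivity) (by positivity)
      linarith
    linarith
  · -- case x < 1 : use log(1+t) ≥ t - t²/2 with t = (1-x)/x
    set t : ℝ := (1 - x) / x with htdef
    have ht0 : 0 ≤ t := by
      apply div_nonneg (by linarith) (le_of_lt hx0)
    have h1t : 1 + t = x⁻¹ := by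
      rw [htdef]; field_simp; ring
    have := aux_log_quad t ht0
    rw [h1t, Real.log_inv] at this
    have hlog : Real.log x ≤ t ^ 2 / 2 - t := by linarith
    have h2 : x * Real.log x ≤ x * (t ^ 2 / 2 - t) :=
      mul_le_mul_of_nonneg_left hlog (le_of_lt hx0)
    have h3 : x * (t ^ 2 / 2 - t) = (x - 1) + (x - 1) ^ 2 / (2 * x) := by
      rw [htdef]; field_simp; ring
    have h4 : (x - 1) ^ 2 / (2 * x) ≤ (x - 1) ^ 2 / (2 * c) := by
      apply div_le_div_of_nonneg_left (by positivity) (by positivity)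
      linarith
    linarith

/-- **KL collapse** (Theorem 1 of the paper): if `m = (1−η)·p + η·q` is the mixture of
probability mass functions `p` and `q` with `0 ≤ η ≤ 1/2`, `p` everywhere positive,
and the chi-squared divergence `χ²(q‖p) ≤ 1`, then `KL(m‖p) ≤ η²/(2(1−η))`. -/
theorem kl_collapse {α : Type*} [Fintype α] [Nonempty α]
    (p q : α → ℝ)
    (hp : ∀ a, 0 < p a) (hpsum : ∑ a, p a = 1)
    (hq : ∀ a, 0 ≤ q a) (hqsum : ∑ a, q a = 1)
    (η : ℝ) (hη0 : 0 ≤ η) (hη1 : η ≤ 1 / 2)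
    (hchi : ∑ a, (q a - p a) ^ 2 / p a ≤ 1) :
    ∑ a, ((1 - η) * p a + η * q a) *
        Real.log (((1 - η) * p a + η * q a) / p a) ≤ η ^ 2 / (2 * (1 - η)) := by
  set c : ℝ := 1 - η with hcdef
  have hc0 : 0 < c := by rw [hcdef]; linarith
  have hc1 : c ≤ 1 := by rw [hcdef]; linarith
  have hpt : ∀ a, ((1 - η) * p a + η * q a) *
      Real.log (((1 - η) * p a + η * q a) / p a) ≤
      η * (q a - p a) + η ^ 2 * ((q a - p a) ^ 2 / p a) / (2 * c) := by
    intro a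
    set m : ℝ := (1 - η) * p a + η * q a with hmdef
    have hpa := hp a
    have hqa := hq a
    have hxc : c ≤ m / p a := by
      rw [le_div_iff₀ hpa, hcdef, hmdef]
      nlinarith
    have hkey := aux_key c (m / p a) hc0 hc1 hxc
    have hmul : p a * ((m / p a) * Real.log (m / p a)) = m * Real.log (m / p a) := by
      field_simp
    have h2 : m * Real.log (m / p a) ≤
        p a * ((m / p a - 1) + (m / p a - 1) ^ 2 / (2 * c)) := by
      rw [← hmul]
      exact mul_le_mul_of_nonneg_left hkey (le_of_lt hpa)
    have h3 : p a * ((m / p a - 1) + (m / p a - 1) ^ 2 / (2 * c)) =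
        η * (q a - p a) + η ^ 2 * ((q a - p a) ^ 2 / p a) / (2 * c) := by
      rw [hmdef]
      field_simp
      ring
    linarith
  calc ∑ a, ((1 - η) * p a + η * q a) *
        Real.log (((1 - η) * p a + η * q a) / p a)
      ≤ ∑ a, (η * (q a - p a) + η ^ 2 * ((q a - p a) ^ 2 / p a) / (2 * c)) :=
        Finset.sum_le_sum fun a _ => hpt a
    _ = η * (∑ a, (q a - p a)) + (η ^ 2 / (2 * c)) * ∑ a, (q a - p a) ^ 2 / p a := by
        rw [Finset.mul_sum, Finset.mul_sum, ← Finset.sum_add_distrib]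
        apply Finset.sum_congr rfl
        intro a _
        ring
    _ = (η ^ 2 / (2 * c)) * ∑ a, (q a - p a) ^ 2 / p a := by
        rw [Finset.sum_sub_distrib, hqsum, hpsum]
        ring
    _ ≤ (η ^ 2 / (2 * c)) * 1 := by
        apply mul_le_mul_of_nonneg_left hchi (by positivity)
    _ = η ^ 2 / (2 * (1 - η)) := by rw [hcdef]; ring
end

section
/- Let α be a finite nonempty type and let p, q : α → ℝ be probability mass functions with p a > 0 for every a. Let η be a real number with 0 ≤ η ≤ 1/2, and set m = (1−η)·p + η·q (pointwise). Then KL(m‖p) ≤ χ²(q‖p) · η² / (2·(1−η)). -/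
open Finset Real

private lemma kl_key (c x : ℝ) (hc0 : 0 < c) (hc1 : c ≤ 1) (hx : c ≤ x) :
    x * Real.log x - x + 1 ≤ (x - 1) ^ 2 / (2 * c) := by
  have hx0 : 0 < x := lt_of_lt_of_le hc0 hx
  set F : ℝ → ℝ := fun y => (y - 1) ^ 2 / (2 * c) - (y * Real.log y - y + 1) with hF
  have hderiv : ∀ y : ℝ, 0 < y → HasDerivAt F ((y - 1) / c - Real.log y) y := by
    intro y hy
    have h1 : HasDerivAt (fun y : ℝ => (y - 1) ^ 2 / (2 * c)) ((y - 1) / c) y := by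
      have h : HasDerivAt (fun y : ℝ => (y - 1) ^ 2) (2 * (y - 1) ^ 1 * 1) y :=
        ((hasDerivAt_id y).sub_const 1).pow 2
      have := h.div_const (2 * c)
      refine this.congr_deriv ?_
      field_simp
    have h2 : HasDerivAt (fun y : ℝ => y * Real.log y) (Real.log y + 1) y :=
      Real.hasDerivAt_mul_log hy.ne'
    have h3 : HasDerivAt (fun y : ℝ => y * Real.log y - y + 1)
        (Real.log y + 1 - 1) y := ((h2.sub (hasDerivAt_id y)).add_const 1)
    have := h1.sub h3
    refine this.congr_deriv ?_
    ring
  have hF1 : F 1 = 0 := by simp [hF]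
  have key : 0 ≤ F x := by
    rcases le_total x 1 with hx1 | hx1
    · have hA : AntitoneOn F (Set.Icc c 1) := by
        apply antitoneOn_of_deriv_nonpos (convex_Icc c 1)
        · intro y hy
          exact (hderiv y (lt_of_lt_of_le hc0 hy.1)).differentiableAt.continuousAt.continuousWithinAt
        · intro y hy
          rw [interior_Icc] at hy
          exact ((hderiv y (lt_of_lt_of_le hc0 hy.1.le)).differentiableAt).differentiableWithinAt
        · intro y hy
          rw [interior_Icc] at hy
          have hy0 : 0 < y := lt_of_lt_of_le hc0 hy.1.le
          rw [(hderiv y hy0).deriv]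
          have hlog : 1 - y⁻¹ ≤ Real.log y := Real.one_sub_inv_le_log_of_pos hy0
          have h2 : (y - 1) / c ≤ 1 - y⁻¹ := by
            rw [div_le_iff₀ hc0]
            have hmul : (y - 1) * y ≤ (y - 1) * c := by nlinarith [hy.1, hy.2]
            have heq : (1 - y⁻¹) * c = (y - 1) * c / y := by field_simp
            rw [heq, le_div_iff₀ hy0]
            linarith
          linarith
      have := hA ⟨hx, hx1⟩ ⟨hc1, le_refl 1⟩ hx1
      rw [hF1] at this
      exact this
    · have hM : MonotoneOn F (Set.Ici 1) := by
        apply monotoneOn_of_deriv_nonneg (convex_Ici 1)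
        · intro y hy
          exact (hderiv y (lt_of_lt_of_le one_pos hy)).differentiableAt.continuousAt.continuousWithinAt
        · intro y hy
          rw [interior_Ici] at hy
          exact ((hderiv y (lt_trans one_pos hy)).differentiableAt).differentiableWithinAt
        · intro y hy
          rw [interior_Ici] at hy
          have hy0 : 0 < y := lt_trans one_pos hy
          rw [(hderiv y hy0).deriv]
          have hlog : Real.log y ≤ y - 1 := Real.log_le_sub_one_of_pos hy0
          have : y - 1 ≤ (y - 1) / c := by
            have hy1 : (1:ℝ) < y := hy
            rw [le_div_iff₀ hc0]
            nlinarith [mul_nonneg (by linarith : (0:ℝ) ≤ y - 1) (by linarith : (0:ℝ) ≤ 1 - c)]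
          linarith
      have := hM (Set.mem_Ici.2 le_rfl) (Set.mem_Ici.2 hx1) hx1
      rw [hF1] at this
      exact this
  simpa [hF, sub_nonneg] using key

/-- Quantitative KL collapse: `KL((1−η)p + ηq ‖ p) ≤ χ²(q‖p) · η² / (2(1−η))`. -/
theorem kl_collapse_quantitative {α : Type*} [Fintype α] [Nonempty α]
    (p q : α → ℝ)
    (hp : ∀ a, 0 < p a) (hpsum : ∑ a, p a = 1)
    (hq : ∀ a, 0 ≤ q a) (hqsum : ∑ a, q a = 1)
    (η : ℝ) (hη0 : 0 ≤ η) (hη1 : η ≤ 1 / 2) :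
    ∑ a, ((1 - η) * p a + η * q a) *
        Real.log (((1 - η) * p a + η * q a) / p a)
      ≤ (∑ a, (q a - p a) ^ 2 / p a) * η ^ 2 / (2 * (1 - η)) := by
  set c : ℝ := 1 - η with hc
  have hc0 : 0 < c := by simp [hc]; linarith
  have hc1 : c ≤ 1 := by simp [hc]; linarith
  have hpt : ∀ a, ((1 - η) * p a + η * q a) *
      Real.log (((1 - η) * p a + η * q a) / p a)
      ≤ (((1 - η) * p a + η * q a) - p a) + (q a - p a) ^ 2 / p a * η ^ 2 / (2 * c) := by
    intro a
    have hpa := hp a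
    set m : ℝ := (1 - η) * p a + η * q a with hm
    have hxc : c ≤ m / p a := by
      rw [le_div_iff₀ hpa]
      have := hq a
      nlinarith
    have := kl_key c (m / p a) hc0 hc1 hxc
    have hrw : (m / p a - 1) ^ 2 / (2 * c) = (m - p a) ^ 2 / p a ^ 2 / (2 * c) := by
      rw [div_sub_one hpa.ne', div_pow]
    rw [hrw] at this
    have h2 := mul_le_mul_of_nonneg_left this hpa.le
    have hmp : (m - p a) = η * (q a - p a) := by rw [hm]; ring
    calc m * Real.log (m / p a)
        = p a * (m / p a * Real.log (m / p a) - m / p a + 1) + (m - p a) := by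
          field_simp
          try ring
      _ ≤ p a * ((m - p a) ^ 2 / p a ^ 2 / (2 * c)) + (m - p a) := by linarith
      _ = (m - p a) + (q a - p a) ^ 2 / p a * η ^ 2 / (2 * c) := by
          rw [hmp]; field_simp
          try ring
  calc ∑ a, ((1 - η) * p a + η * q a) *
        Real.log (((1 - η) * p a + η * q a) / p a)
      ≤ ∑ a, ((((1 - η) * p a + η * q a) - p a) + (q a - p a) ^ 2 / p a * η ^ 2 / (2 * c)) :=
        Finset.sum_le_sum fun a _ => hpt a
    _ = (∑ a, (q a - p a) ^ 2 / p a) * η ^ 2 / (2 * c) := by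
        rw [Finset.sum_add_distrib]
        have h1 : ∑ a, (((1 - η) * p a + η * q a) - p a) = 0 := by
          simp only [Finset.sum_sub_distrib]
          rw [Finset.sum_add_distrib, ← Finset.mul_sum, ← Finset.mul_sum, hpsum, hqsum]
          ring
        rw [h1, zero_add, ← Finset.sum_div, ← Finset.sum_mul]
    _ = (∑ a, (q a - p a) ^ 2 / p a) * η ^ 2 / (2 * (1 - η)) := by rw [hc]
end

section
/- Let α be a finite nonempty type and let p, q : α → ℝ be probability mass functions with p a > 0 for every a. For η ∈ [0,1) define m_η = (1−η)·p + η·q (pointwise, so m_η a > 0 for all a) and f(η) = Σ_a m_η a · log(m_η a / p a). Then f is twice differentiable on [0,1) and its second derivative is f''(η) = Σ_a (q a − p a)² / m_η a for every η ∈ [0,1). -/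
open Finset Real Set

/-- The map `f(η) = KL((1−η)p + ηq ‖ p)` is twice differentiable on `[0,1)`
(with the mixture everywhere positive there), and its second derivative equals
`∑ a, (q a − p a)² / m_η a` for every `η ∈ [0,1)`. -/
theorem kl_mix_second_deriv {α : Type*} [Fintype α] [Nonempty α]
    (p q : α → ℝ)
    (hp : ∀ a, 0 < p a) (hpsum : ∑ a, p a = 1)
    (hq : ∀ a, 0 ≤ q a) (hqsum : ∑ a, q a = 1) :
    (∀ η ∈ Set.Ico (0 : ℝ) 1, ∀ a, 0 < (1 - η) * p a + η * q a) ∧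
    ∃ f' : ℝ → ℝ,
      ∀ η ∈ Set.Ico (0 : ℝ) 1,
        HasDerivWithinAt
          (fun s => ∑ a, ((1 - s) * p a + s * q a) *
            Real.log (((1 - s) * p a + s * q a) / p a))
          (f' η) (Set.Ico (0 : ℝ) 1) η ∧
        HasDerivWithinAt f'
          (∑ a, (q a - p a) ^ 2 / ((1 - η) * p a + η * q a))
          (Set.Ico (0 : ℝ) 1) η := by
  have hm : ∀ η ∈ Set.Ico (0 : ℝ) 1, ∀ a, 0 < (1 - η) * p a + η * q a := by
    intro η hη a
    have h1 : 0 < (1 - η) * p a := mul_pos (by linarith [hη.2]) (hp a)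
    have h2 : 0 ≤ η * q a := mul_nonneg hη.1 (hq a)
    linarith
  refine ⟨hm, fun η => ∑ a, (q a - p a) *
      (Real.log (((1 - η) * p a + η * q a) / p a) + 1), fun η hη => ?_⟩
  have hM : ∀ a, HasDerivAt (fun s : ℝ => (1 - s) * p a + s * q a) (q a - p a) η := by
    intro a
    have h1 : HasDerivAt (fun s : ℝ => (1 - s) * p a + s * q a)
        ((0 - 1) * p a + 1 * q a) η :=
      (((hasDerivAt_const η (1:ℝ)).sub (hasDerivAt_id η)).mul_const (p a)).add
        ((hasDerivAt_id η).mul_const (q a))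
    convert h1 using 1; ring
  have hL : ∀ a, HasDerivAt (fun s : ℝ => Real.log (((1 - s) * p a + s * q a) / p a))
      ((q a - p a) / ((1 - η) * p a + η * q a)) η := by
    intro a
    have hma := hm η hη a
    have hne : ((1 - η) * p a + η * q a) / p a ≠ 0 :=
      div_ne_zero (ne_of_gt hma) (ne_of_gt (hp a))
    have h1 := ((hM a).div_const (p a)).log hne
    convert h1 using 1
    field_simp
    rw [mul_div_mul_left _ _ (hp a).ne']
  constructor
  · have h : HasDerivAt
        (fun s => ∑ a, ((1 - s) * p a + s * q a) *
          Real.log (((1 - s) * p a + s * q a) / p a))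
        (∑ a, (q a - p a) *
          (Real.log (((1 - η) * p a + η * q a) / p a) + 1)) η := by
      apply HasDerivAt.fun_sum
      intro a _
      have hma := hm η hη a
      have h1 := (hM a).fun_mul (hL a)
      convert h1 using 1
      rfl
      rw [mul_div_cancel₀ _ hma.ne']
      ring
    exact h.hasDerivWithinAt
  · have h : HasDerivAt
        (fun s => ∑ a, (q a - p a) *
          (Real.log (((1 - s) * p a + s * q a) / p a) + 1))
        (∑ a, (q a - p a) ^ 2 / ((1 - η) * p a + η * q a)) η := by
      apply HasDerivAt.fun_sum
      intro a _
      have h1 := ((hL a).add_const 1).const_mul (q a - p a)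
      convert h1 using 1
      rfl
      rw [sq, mul_div_assoc]
    exact h.hasDerivWithinAt
end

section
/- Let α be a finite nonempty type and let p, q : α → ℝ be probability mass functions with p a > 0 for every a. For η ∈ [0,1) define m_η = (1−η)·p + η·q and f(η) = Σ_a m_η a · log(m_η a / p a). Then for every η ∈ [0,1), the second derivative satisfies f''(η) = Σ_a (q a − p a)² / m_η a ≤ χ²(q‖p) / (1−η). -/
open Finset Real Set

/-- Second-derivative bound for `f(η) = KL((1−η)p + ηq ‖ p)` on `[0,1)`:
`f''(η) = ∑ a, (q a − p a)² / m_η a ≤ χ²(q‖p) / (1−η)`. -/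
theorem kl_mix_second_deriv_bound {α : Type*} [Fintype α] [Nonempty α]
    (p q : α → ℝ)
    (hp : ∀ a, 0 < p a) (hpsum : ∑ a, p a = 1)
    (hq : ∀ a, 0 ≤ q a) (hqsum : ∑ a, q a = 1) :
    ∃ f' f'' : ℝ → ℝ,
      ∀ η ∈ Set.Ico (0 : ℝ) 1,
        HasDerivWithinAt
          (fun s => ∑ a, ((1 - s) * p a + s * q a) *
            Real.log (((1 - s) * p a + s * q a) / p a))
          (f' η) (Set.Ico (0 : ℝ) 1) η ∧
        HasDerivWithinAt f' (f'' η) (Set.Ico (0 : ℝ) 1) η ∧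
        f'' η = ∑ a, (q a - p a) ^ 2 / ((1 - η) * p a + η * q a) ∧
        f'' η ≤ (∑ a, (q a - p a) ^ 2 / p a) / (1 - η) := by
  classical
  refine ⟨fun s => ∑ a, (q a - p a) * (Real.log (((1 - s) * p a + s * q a) / p a) + 1),
          fun s => ∑ a, (q a - p a) ^ 2 / ((1 - s) * p a + s * q a), ?_⟩
  intro η hη
  obtain ⟨hη0, hη1⟩ := hη
  have hm : ∀ a, 0 < (1 - η) * p a + η * q a := fun a =>
    add_pos_of_pos_of_nonneg (mul_pos (by linarith) (hp a)) (mul_nonneg hη0 (hq a))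
  have hderivm : ∀ a, HasDerivAt (fun s : ℝ => (1 - s) * p a + s * q a) (q a - p a) η := by
    intro a
    have h := (((hasDerivAt_const η (1 : ℝ)).sub (hasDerivAt_id η)).mul_const (p a)).add
      ((hasDerivAt_id η).mul_const (q a))
    refine h.congr_deriv ?_
    ring
  have hlog : ∀ a, HasDerivAt (fun s : ℝ => Real.log (((1 - s) * p a + s * q a) / p a))
      ((q a - p a) / ((1 - η) * p a + η * q a)) η := by
    intro a
    have hne : ((1 - η) * p a + η * q a) / p a ≠ 0 :=
      ne_of_gt (div_pos (hm a) (hp a))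
    have h := ((hderivm a).div_const (p a)).log hne
    refine h.congr_deriv ?_
    field_simp
    rw [mul_div_mul_left _ _ (ne_of_gt (hp a))]
  have h1 : ∀ a, HasDerivAt
      (fun s : ℝ => ((1 - s) * p a + s * q a) * Real.log (((1 - s) * p a + s * q a) / p a))
      ((q a - p a) * (Real.log (((1 - η) * p a + η * q a) / p a) + 1)) η := by
    intro a
    have h := (hderivm a).mul (hlog a)
    refine h.congr_deriv ?_
    rw [mul_div_cancel₀ _ (ne_of_gt (hm a))]
    ring
  have h2 : ∀ a, HasDerivAt
      (fun s : ℝ => (q a - p a) * (Real.log (((1 - s) * p a + s * q a) / p a) + 1))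
      ((q a - p a) ^ 2 / ((1 - η) * p a + η * q a)) η := by
    intro a
    have h := ((hlog a).add_const 1).const_mul (q a - p a)
    refine h.congr_deriv ?_
    field_simp [ne_of_gt (hm a)]
  refine ⟨(HasDerivAt.fun_sum fun a _ => h1 a).hasDerivWithinAt,
    (HasDerivAt.fun_sum fun a _ => h2 a).hasDerivWithinAt, rfl, ?_⟩
  rw [Finset.sum_div]
  apply Finset.sum_le_sum
  intro a _
  rw [div_div, mul_comm (p a)]
  exact div_le_div_of_nonneg_left (sq_nonneg _) (mul_pos (by linarith) (hp a))
    (by nlinarith [hq a, hp a])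
end

section
/- Let T be a positive natural number. For each i ∈ {1, …, T}, let α_i be a finite nonempty type and let p_i, q_i : α_i → ℝ be probability mass functions with p_i a > 0 for every a, and suppose χ²(q_i‖p_i) ≤ 1 for every i. Let η ∈ [0, 1/2] and set m_i = (1−η)·p_i + η·q_i. Then the KL divergence between the product distributions satisfies KL(⊗_{i=1}^T m_i ‖ ⊗_{i=1}^T p_i) = Σ_{i=1}^T KL(m_i‖p_i) ≤ T·η² / (2·(1−η)). -/
open Finset Real

private lemma hasDerivAt_klF (c : ℝ) (hc : c ≠ 0) {t : ℝ} (ht : t ≠ 0) :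
    HasDerivAt (fun t : ℝ => (t - 1) ^ 2 / (2 * c) - t * Real.log t + t - 1)
      ((t - 1) / c - Real.log t) t := by
  have h1 : HasDerivAt (fun t : ℝ => (t - 1) ^ 2 / (2 * c)) ((t - 1) / c) t := by
    have h := (((hasDerivAt_id t).sub_const 1).pow 2).div_const (2 * c)
    refine h.congr_deriv ?_
    simp only [id]
    field_simp
    ring
  have h2 := Real.hasDerivAt_mul_log ht
  have h := ((h1.sub h2).add (hasDerivAt_id t)).sub_const 1
  refine h.congr_deriv ?_
  ring

private lemma key_ineq {c : ℝ} (hc0 : 0 < c) (hc1 : c ≤ 1) {t : ℝ} (ht : c ≤ t) :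
    t * Real.log t - t + 1 ≤ (t - 1) ^ 2 / (2 * c) := by
  set F : ℝ → ℝ := fun t => (t - 1) ^ 2 / (2 * c) - t * Real.log t + t - 1 with hF
  have ht0 : 0 < t := lt_of_lt_of_le hc0 ht
  have hF1 : F 1 = 0 := by simp [hF]
  have key : 0 ≤ F t := by
    rcases le_total 1 t with h | h
    · have mono : MonotoneOn F (Set.Ici 1) := by
        apply monotoneOn_of_deriv_nonneg (convex_Ici 1)
        · intro x hx
          have hx0 : (0:ℝ) < x := lt_of_lt_of_le one_pos hx
          exact (hasDerivAt_klF c hc0.ne' hx0.ne').continuousAt.continuousWithinAt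
        · intro x hx
          rw [interior_Ici] at hx
          have hx0 : (0:ℝ) < x := lt_trans one_pos hx
          exact (hasDerivAt_klF c hc0.ne' hx0.ne').differentiableAt.differentiableWithinAt
        · intro x hx
          rw [interior_Ici] at hx
          have hx0 : (0:ℝ) < x := lt_trans one_pos hx
          rw [(hasDerivAt_klF c hc0.ne' hx0.ne').deriv]
          have hlog : Real.log x ≤ x - 1 := Real.log_le_sub_one_of_pos hx0
          have hx1 : (1:ℝ) < x := hx
          have h2 : x - 1 ≤ (x - 1) / c := by
            rw [le_div_iff₀ hc0]; nlinarith
          linarith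
      have := mono Set.self_mem_Ici (Set.mem_Ici.mpr h) h
      rw [hF1] at this; exact this
    · have anti : AntitoneOn F (Set.Icc c 1) := by
        apply antitoneOn_of_deriv_nonpos (convex_Icc c 1)
        · intro x hx
          have hx0 : (0:ℝ) < x := lt_of_lt_of_le hc0 hx.1
          exact (hasDerivAt_klF c hc0.ne' hx0.ne').continuousAt.continuousWithinAt
        · intro x hx
          rw [interior_Icc] at hx
          have hx0 : (0:ℝ) < x := lt_trans hc0 hx.1
          exact (hasDerivAt_klF c hc0.ne' hx0.ne').differentiableAt.differentiableWithinAt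
        · intro x hx
          rw [interior_Icc] at hx
          have hx0 : (0:ℝ) < x := lt_trans hc0 hx.1
          rw [(hasDerivAt_klF c hc0.ne' hx0.ne').deriv]
          have hlog : 1 - x⁻¹ ≤ Real.log x := Real.one_sub_inv_le_log_of_pos hx0
          have h2 : (x - 1) / c ≤ (x - 1) / x := by
            rw [div_le_div_iff₀ hc0 hx0]; nlinarith [hx.1.le, hx.2.le]
          have h3 : (x - 1) / x = 1 - x⁻¹ := by field_simp
          linarith
      have := anti (Set.mem_Icc.mpr ⟨ht, h⟩) (Set.mem_Icc.mpr ⟨hc1, le_refl 1⟩) h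
      rw [hF1] at this; exact this
  have : 0 ≤ (t - 1) ^ 2 / (2 * c) - t * Real.log t + t - 1 := key
  linarith

private lemma pointwise_bound (η P Q : ℝ) (hη0 : 0 ≤ η) (hη1 : η ≤ 1 / 2)
    (hP : 0 < P) (hQ : 0 ≤ Q) :
    ((1 - η) * P + η * Q) * Real.log (((1 - η) * P + η * Q) / P)
        - ((1 - η) * P + η * Q) + P
      ≤ η ^ 2 * ((Q - P) ^ 2 / P) / (2 * (1 - η)) := by
  have hc0 : (0:ℝ) < 1 - η := by linarith
  have hc1 : (1:ℝ) - η ≤ 1 := by linarith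
  have hηQ : 0 ≤ η * Q := mul_nonneg hη0 hQ
  set M := (1 - η) * P + η * Q with hM
  have hMpos : 0 < M := by nlinarith
  have ht : 1 - η ≤ M / P := by
    rw [le_div_iff₀ hP]; nlinarith
  have hk := key_ineq hc0 hc1 ht
  have hk2 := mul_le_mul_of_nonneg_left hk hP.le
  have hL : P * (M / P * Real.log (M / P) - M / P + 1)
      = M * Real.log (M / P) - M + P := by
    field_simp
  have hR : P * ((M / P - 1) ^ 2 / (2 * (1 - η)))
      = η ^ 2 * ((Q - P) ^ 2 / P) / (2 * (1 - η)) := by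
    rw [hM]; field_simp; ring
  rw [hL, hR] at hk2
  exact hk2

private lemma single_kl {β : Type*} [Fintype β] (p q : β → ℝ)
    (hp : ∀ a, 0 < p a) (hpsum : ∑ a, p a = 1)
    (hq : ∀ a, 0 ≤ q a) (hqsum : ∑ a, q a = 1)
    (hchi : ∑ a, (q a - p a) ^ 2 / p a ≤ 1)
    (η : ℝ) (hη0 : 0 ≤ η) (hη1 : η ≤ 1 / 2) :
    ∑ a, ((1 - η) * p a + η * q a) *
        Real.log (((1 - η) * p a + η * q a) / p a) ≤ η ^ 2 / (2 * (1 - η)) := by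
  have hc0 : (0:ℝ) < 1 - η := by linarith
  have hmsum : ∑ a, ((1 - η) * p a + η * q a) = 1 := by
    rw [Finset.sum_add_distrib, ← Finset.mul_sum, ← Finset.mul_sum, hpsum, hqsum]; ring
  have hstep : ∑ a, ((1 - η) * p a + η * q a) *
      Real.log (((1 - η) * p a + η * q a) / p a)
      = ∑ a, (((1 - η) * p a + η * q a) *
          Real.log (((1 - η) * p a + η * q a) / p a)
          - ((1 - η) * p a + η * q a) + p a) := by
    rw [Finset.sum_add_distrib, Finset.sum_sub_distrib, hmsum, hpsum]; ring
  rw [hstep]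
  calc ∑ a, (((1 - η) * p a + η * q a) *
          Real.log (((1 - η) * p a + η * q a) / p a)
          - ((1 - η) * p a + η * q a) + p a)
      ≤ ∑ a, η ^ 2 * ((q a - p a) ^ 2 / p a) / (2 * (1 - η)) :=
        Finset.sum_le_sum fun a _ =>
          pointwise_bound η (p a) (q a) hη0 hη1 (hp a) (hq a)
    _ = η ^ 2 / (2 * (1 - η)) * ∑ a, (q a - p a) ^ 2 / p a := by
        rw [Finset.mul_sum]; congr 1; ext a; ring
    _ ≤ η ^ 2 / (2 * (1 - η)) * 1 := by
        apply mul_le_mul_of_nonneg_left hchi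
        positivity
    _ = η ^ 2 / (2 * (1 - η)) := mul_one _

/-- T-token KL collapse: for `T` coordinates, each a mixture
`m_i = (1−η)p_i + ηq_i` with `χ²(q_i‖p_i) ≤ 1` and `0 ≤ η ≤ 1/2`, the KL
divergence between the product distributions tensorizes,
`KL(⊗ m_i ‖ ⊗ p_i) = ∑ i KL(m_i‖p_i)`, and is at most `T·η²/(2(1−η))`. -/
theorem kl_collapse_product (T : ℕ) (hT : 0 < T)
    (α : Fin T → Type*) [∀ i, Fintype (α i)] [∀ i, Nonempty (α i)]
    (p q : ∀ i, α i → ℝ)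
    (hp : ∀ i, ∀ a, 0 < p i a) (hpsum : ∀ i, ∑ a, p i a = 1)
    (hq : ∀ i, ∀ a, 0 ≤ q i a) (hqsum : ∀ i, ∑ a, q i a = 1)
    (hchi : ∀ i, ∑ a, (q i a - p i a) ^ 2 / p i a ≤ 1)
    (η : ℝ) (hη0 : 0 ≤ η) (hη1 : η ≤ 1 / 2) :
    (∑ x : (∀ i, α i),
        (∏ i, ((1 - η) * p i (x i) + η * q i (x i))) *
          Real.log ((∏ i, ((1 - η) * p i (x i) + η * q i (x i))) / ∏ i, p i (x i))
      = ∑ i, ∑ a, ((1 - η) * p i a + η * q i a) *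
          Real.log (((1 - η) * p i a + η * q i a) / p i a)) ∧
    (∑ x : (∀ i, α i),
        (∏ i, ((1 - η) * p i (x i) + η * q i (x i))) *
          Real.log ((∏ i, ((1 - η) * p i (x i) + η * q i (x i))) / ∏ i, p i (x i))
      ≤ T * η ^ 2 / (2 * (1 - η))) := by
  classical
  have hc0 : (0:ℝ) < 1 - η := by linarith
  set m : ∀ i, α i → ℝ := fun i a => (1 - η) * p i a + η * q i a with hm
  have hmpos : ∀ i a, 0 < m i a := by
    intro i a
    have := mul_nonneg hη0 (hq i a)
    have := hp i a
    simp only [hm]; nlinarith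
  have hmsum : ∀ i, ∑ a, m i a = 1 := by
    intro i
    simp only [hm]
    rw [Finset.sum_add_distrib, ← Finset.mul_sum, ← Finset.mul_sum, hpsum, hqsum]; ring
  have heq : ∑ x : (∀ i, α i),
      (∏ i, m i (x i)) * Real.log ((∏ i, m i (x i)) / ∏ i, p i (x i))
      = ∑ i, ∑ a, m i a * Real.log (m i a / p i a) := by
    have hlog : ∀ x : (∀ i, α i),
        Real.log ((∏ i, m i (x i)) / ∏ i, p i (x i))
          = ∑ i, Real.log (m i (x i) / p i (x i)) := by
      intro x
      rw [← Finset.prod_div_distrib]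
      exact Real.log_prod fun i _ =>
        (div_pos (hmpos i (x i)) (hp i (x i))).ne'
    calc ∑ x : (∀ i, α i),
          (∏ i, m i (x i)) * Real.log ((∏ i, m i (x i)) / ∏ i, p i (x i))
        = ∑ x : (∀ i, α i), ∑ i,
            (∏ j, m j (x j)) * Real.log (m i (x i) / p i (x i)) := by
          refine Finset.sum_congr rfl fun x _ => ?_
          rw [hlog x, Finset.mul_sum]
      _ = ∑ i, ∑ x : (∀ i, α i),
            (∏ j, m j (x j)) * Real.log (m i (x i) / p i (x i)) :=
          Finset.sum_comm
      _ = ∑ i, ∑ a, m i a * Real.log (m i a / p i a) := by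
          refine Finset.sum_congr rfl fun i _ => ?_
          set g : ∀ j, α j → ℝ :=
            Function.update m i (fun a => m i a * Real.log (m i a / p i a)) with hg
          have hgprod : ∀ x : (∀ j, α j),
              (∏ j, m j (x j)) * Real.log (m i (x i) / p i (x i))
                = ∏ j, g j (x j) := by
            intro x
            rw [← Finset.mul_prod_erase Finset.univ (fun j => g j (x j))
                  (Finset.mem_univ i),
                ← Finset.mul_prod_erase Finset.univ (fun j => m j (x j))
                  (Finset.mem_univ i)]
            have he : ∏ j ∈ Finset.univ.erase i, g j (x j)
                = ∏ j ∈ Finset.univ.erase i, m j (x j) :=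
              Finset.prod_congr rfl fun j hj => by
                rw [hg, Function.update_of_ne (Finset.ne_of_mem_erase hj)]
            rw [he, hg, Function.update_self]
            ring
          simp_rw [hgprod]
          rw [← Fintype.prod_sum g]
          rw [Fintype.prod_eq_single i (fun j hj => by
            rw [hg, Function.update_of_ne hj]; exact hmsum j)]
          rw [hg, Function.update_self]
  constructor
  · exact heq
  · rw [heq]
    calc ∑ i, ∑ a, m i a * Real.log (m i a / p i a)
        ≤ ∑ _i : Fin T, η ^ 2 / (2 * (1 - η)) :=
          Finset.sum_le_sum fun i _ =>
            single_kl (p i) (q i) (hp i) (hpsum i) (hq i) (hqsum i) (hchi i) η hη0 hη1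
      _ = T * η ^ 2 / (2 * (1 - η)) := by
          rw [Finset.sum_const, Finset.card_univ, Fintype.card_fin, nsmul_eq_mul]
          ring
end
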